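/- For real matrices of size 2^L × 2^L, define the SpAMM approximate product with tolerance τ > 0 recursively: SpAMM(A,B,τ) = 0 if ‖A‖_F ‖B‖_F < τ; at the lowest level (L = 0, i.e. 1×1 matrices) SpAMM(A,B,τ) = A·B; otherwise, splitting A and B into 2×2 block form with 2^{L−1} × 2^{L−1} blocks, the (i,j) block of SpAMM(A,B,τ) is SpAMM(Aᵢ₀, B₀ⱼ, τ) + SpAMM(Aᵢ₁, B₁ⱼ, τ). Define the error estimate CSE(A,B,τ) recursively: CSE(A,B,τ) = 0 if ‖A‖_F ‖B‖_F = 0; at the lowest level CSE(A,B,τ) = ‖A‖_F ‖B‖_F if ‖A‖_F ‖B‖_F < τ and 0 otherwise; otherwise CSE(A,B,τ) = ( Σ_{i,j ∈ {0,1}} ( CSE(Aᵢ₀, B₀ⱼ, τ) + CSE(Aᵢ₁, B₁ⱼ, τ) )² )^{1/2}. Then for all such A, B and τ > 0, the true error of the approximate product is bounded by the computed estimate: ‖SpAMM(A,B,τ) − A·B‖_F ≤ CSE(A,B,τ). -/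

import Mathlib

open Matrix

/-- Index type for quadtree matrices: `QIdx L` indexes a `2^L × 2^L` matrix.
At the lowest level (`L = 0`) the matrix is `1×1`; a matrix at level `L+1` is
composed of four quadrants at level `L`. -/
def QIdx : ℕ → Type
  | 0 => Unit
  | L + 1 => QIdx L ⊕ QIdx L

instance QIdx.fintype : (L : ℕ) → Fintype (QIdx L)
  | 0 => inferInstanceAs (Fintype Unit)
  | L + 1 => letI := QIdx.fintype L; inferInstanceAs (Fintype (QIdx L ⊕ QIdx L))

/-- The Frobenius norm of a real matrix: `‖M‖_F = (Σ_{i,j} M_{ij}²)^{1/2}`. -/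
noncomputable def frobNorm {m n : Type*} [Fintype m] [Fintype n]
    (M : Matrix m n ℝ) : ℝ :=
  Real.sqrt (∑ i, ∑ j, (M i j) ^ 2)

/-- The SpAMM approximate product with tolerance `τ`: return `0` if
`‖A‖_F ‖B‖_F < τ`; at the lowest level return `A·B`; otherwise assemble the
`(i,j)` block as `SpAMM(Aᵢ₀,B₀ⱼ,τ) + SpAMM(Aᵢ₁,B₁ⱼ,τ)` (blocks in the paper's
quadrant enumeration `X = [[X₀₀, X₁₀],[X₀₁, X₁₁]]`). -/
noncomputable def spamm :
    (L : ℕ) → Matrix (QIdx L) (QIdx L) ℝ → Matrix (QIdx L) (QIdx L) ℝ → ℝ →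
      Matrix (QIdx L) (QIdx L) ℝ
  | 0, A, B, τ => if frobNorm A * frobNorm B < τ then 0 else A * B
  | L + 1, A, B, τ =>
      if frobNorm A * frobNorm B < τ then 0
      else
        Matrix.fromBlocks
          (spamm L A.toBlocks₁₁ B.toBlocks₁₁ τ + spamm L A.toBlocks₁₂ B.toBlocks₂₁ τ)
          (spamm L A.toBlocks₁₁ B.toBlocks₁₂ τ + spamm L A.toBlocks₁₂ B.toBlocks₂₂ τ)
          (spamm L A.toBlocks₂₁ B.toBlocks₁₁ τ + spamm L A.toBlocks₂₂ B.toBlocks₂₁ τ)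
          (spamm L A.toBlocks₂₁ B.toBlocks₁₂ τ + spamm L A.toBlocks₂₂ B.toBlocks₂₂ τ)

/-- The CSE error estimate: `0` if `‖A‖_F ‖B‖_F = 0`; at the lowest level,
`‖A‖_F ‖B‖_F` if `‖A‖_F ‖B‖_F < τ` and `0` otherwise; otherwise the square root
of the sum over the four blocks of the squared accumulated blockwise estimates. -/
noncomputable def cse :
    (L : ℕ) → Matrix (QIdx L) (QIdx L) ℝ → Matrix (QIdx L) (QIdx L) ℝ → ℝ → ℝ
  | 0, A, B, τ =>
      if frobNorm A * frobNorm B = 0 then 0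
      else if frobNorm A * frobNorm B < τ then frobNorm A * frobNorm B else 0
  | L + 1, A, B, τ =>
      if frobNorm A * frobNorm B = 0 then 0
      else
        Real.sqrt
          ((cse L A.toBlocks₁₁ B.toBlocks₁₁ τ + cse L A.toBlocks₁₂ B.toBlocks₂₁ τ) ^ 2
          + (cse L A.toBlocks₁₁ B.toBlocks₁₂ τ + cse L A.toBlocks₁₂ B.toBlocks₂₂ τ) ^ 2
          + (cse L A.toBlocks₂₁ B.toBlocks₁₁ τ + cse L A.toBlocks₂₂ B.toBlocks₂₁ τ) ^ 2
          + (cse L A.toBlocks₂₁ B.toBlocks₁₂ τ + cse L A.toBlocks₂₂ B.toBlocks₂₂ τ) ^ 2)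


attribute [local instance] Matrix.frobeniusSeminormedAddCommGroup

lemma frobNorm_eq_norm {m n : Type*} [Fintype m] [Fintype n] (M : Matrix m n ℝ) :
    frobNorm M = ‖M‖ := by
  rw [Matrix.frobenius_norm_def, frobNorm, Real.sqrt_eq_rpow]
  congr 1
  refine Finset.sum_congr rfl fun i _ => Finset.sum_congr rfl fun j _ => ?_
  rw [show (2:ℝ) = ((2:ℕ):ℝ) by norm_num, Real.rpow_natCast, Real.norm_eq_abs, sq_abs]

lemma frobNorm_nonneg {m n : Type*} [Fintype m] [Fintype n] (M : Matrix m n ℝ) :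
    0 ≤ frobNorm M := Real.sqrt_nonneg _

lemma frobNorm_sq {m n : Type*} [Fintype m] [Fintype n] (M : Matrix m n ℝ) :
    frobNorm M ^ 2 = ∑ i, ∑ j, (M i j) ^ 2 :=
  Real.sq_sqrt (Finset.sum_nonneg fun _ _ => Finset.sum_nonneg fun _ _ => sq_nonneg _)

lemma frobNorm_eq_zero {m n : Type*} [Fintype m] [Fintype n] {M : Matrix m n ℝ}
    (h : frobNorm M = 0) : M = 0 := by
  have h2 : frobNorm M ^ 2 = 0 := by rw [h]; ring
  rw [frobNorm_sq] at h2
  ext i j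
  have := (Finset.sum_eq_zero_iff_of_nonneg
    (fun _ _ => Finset.sum_nonneg fun _ _ => sq_nonneg _)).mp h2 i (Finset.mem_univ i)
  have := (Finset.sum_eq_zero_iff_of_nonneg (fun _ _ => sq_nonneg _)).mp this j
    (Finset.mem_univ j)
  simpa [pow_eq_zero_iff] using this

lemma frobNorm_mul_le {l m n : Type*} [Fintype l] [Fintype m] [Fintype n]
    (A : Matrix l m ℝ) (B : Matrix m n ℝ) :
    frobNorm (A * B) ≤ frobNorm A * frobNorm B := by
  simp only [frobNorm_eq_norm]; exact Matrix.frobenius_norm_mul A B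

lemma frobNorm_add_le {m n : Type*} [Fintype m] [Fintype n] (X Y : Matrix m n ℝ) :
    frobNorm (X + Y) ≤ frobNorm X + frobNorm Y := by
  simp only [frobNorm_eq_norm]; exact norm_add_le X Y

lemma frobNorm_fromBlocks_sq {l m n o : Type*} [Fintype l] [Fintype m] [Fintype n] [Fintype o]
    (A : Matrix l n ℝ) (B : Matrix l o ℝ) (C : Matrix m n ℝ) (D : Matrix m o ℝ) :
    frobNorm (Matrix.fromBlocks A B C D) ^ 2
      = frobNorm A ^ 2 + frobNorm B ^ 2 + frobNorm C ^ 2 + frobNorm D ^ 2 := by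
  simp only [frobNorm_sq, Fintype.sum_sum_type, Matrix.fromBlocks_apply₁₁,
    Matrix.fromBlocks_apply₁₂, Matrix.fromBlocks_apply₂₁, Matrix.fromBlocks_apply₂₂,
    Finset.sum_add_distrib]
  ring

lemma frobNorm_fromBlocks_le {l m n o : Type*} [Fintype l] [Fintype m] [Fintype n] [Fintype o]
    {A : Matrix l n ℝ} {B : Matrix l o ℝ} {C : Matrix m n ℝ} {D : Matrix m o ℝ}
    {e f g h : ℝ} (hA : frobNorm A ≤ e) (hB : frobNorm B ≤ f)
    (hC : frobNorm C ≤ g) (hD : frobNorm D ≤ h) :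
    frobNorm (Matrix.fromBlocks A B C D) ≤ Real.sqrt (e ^ 2 + f ^ 2 + g ^ 2 + h ^ 2) := by
  have hsq : frobNorm (Matrix.fromBlocks A B C D) ^ 2 ≤ e ^ 2 + f ^ 2 + g ^ 2 + h ^ 2 := by
    rw [frobNorm_fromBlocks_sq]
    refine add_le_add (add_le_add (add_le_add ?_ ?_) ?_) ?_ <;>
      exact pow_le_pow_left₀ (frobNorm_nonneg _) ‹_› 2
  calc frobNorm (Matrix.fromBlocks A B C D)
      = Real.sqrt (frobNorm (Matrix.fromBlocks A B C D) ^ 2) :=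
        (Real.sqrt_sq (frobNorm_nonneg _)).symm
    _ ≤ Real.sqrt (e ^ 2 + f ^ 2 + g ^ 2 + h ^ 2) := Real.sqrt_le_sqrt hsq


lemma frobNorm_toBlocks₁₁_le {m n : Type*} [Fintype m] [Fintype n]
    (M : Matrix (m ⊕ m) (n ⊕ n) ℝ) : frobNorm M.toBlocks₁₁ ≤ frobNorm M := by
  have h := frobNorm_fromBlocks_sq M.toBlocks₁₁ M.toBlocks₁₂ M.toBlocks₂₁ M.toBlocks₂₂
  rw [Matrix.fromBlocks_toBlocks] at h
  nlinarith [frobNorm_nonneg M.toBlocks₁₁, frobNorm_nonneg M, sq_nonneg (frobNorm M.toBlocks₁₂),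
    sq_nonneg (frobNorm M.toBlocks₂₁), sq_nonneg (frobNorm M.toBlocks₂₂)]

lemma frobNorm_toBlocks₁₂_le {m n : Type*} [Fintype m] [Fintype n]
    (M : Matrix (m ⊕ m) (n ⊕ n) ℝ) : frobNorm M.toBlocks₁₂ ≤ frobNorm M := by
  have h := frobNorm_fromBlocks_sq M.toBlocks₁₁ M.toBlocks₁₂ M.toBlocks₂₁ M.toBlocks₂₂
  rw [Matrix.fromBlocks_toBlocks] at h
  nlinarith [frobNorm_nonneg M.toBlocks₁₂, frobNorm_nonneg M, sq_nonneg (frobNorm M.toBlocks₁₁),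
    sq_nonneg (frobNorm M.toBlocks₂₁), sq_nonneg (frobNorm M.toBlocks₂₂)]

lemma frobNorm_toBlocks₂₁_le {m n : Type*} [Fintype m] [Fintype n]
    (M : Matrix (m ⊕ m) (n ⊕ n) ℝ) : frobNorm M.toBlocks₂₁ ≤ frobNorm M := by
  have h := frobNorm_fromBlocks_sq M.toBlocks₁₁ M.toBlocks₁₂ M.toBlocks₂₁ M.toBlocks₂₂
  rw [Matrix.fromBlocks_toBlocks] at h
  nlinarith [frobNorm_nonneg M.toBlocks₂₁, frobNorm_nonneg M, sq_nonneg (frobNorm M.toBlocks₁₁),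
    sq_nonneg (frobNorm M.toBlocks₁₂), sq_nonneg (frobNorm M.toBlocks₂₂)]

lemma frobNorm_toBlocks₂₂_le {m n : Type*} [Fintype m] [Fintype n]
    (M : Matrix (m ⊕ m) (n ⊕ n) ℝ) : frobNorm M.toBlocks₂₂ ≤ frobNorm M := by
  have h := frobNorm_fromBlocks_sq M.toBlocks₁₁ M.toBlocks₁₂ M.toBlocks₂₁ M.toBlocks₂₂
  rw [Matrix.fromBlocks_toBlocks] at h
  nlinarith [frobNorm_nonneg M.toBlocks₂₂, frobNorm_nonneg M, sq_nonneg (frobNorm M.toBlocks₁₁),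
    sq_nonneg (frobNorm M.toBlocks₁₂), sq_nonneg (frobNorm M.toBlocks₂₁)]

lemma fromBlocks_sub' {l m n o : Type*}
    (A A' : Matrix l n ℝ) (B B' : Matrix l o ℝ) (C C' : Matrix m n ℝ) (D D' : Matrix m o ℝ) :
    Matrix.fromBlocks A B C D - Matrix.fromBlocks A' B' C' D'
      = Matrix.fromBlocks (A - A') (B - B') (C - C') (D - D') := by
  ext (i | i) (j | j) <;> simp [Matrix.fromBlocks, Matrix.sub_apply]

lemma cse_nonneg : ∀ (L : ℕ) (A B : Matrix (QIdx L) (QIdx L) ℝ) (τ : ℝ), 0 ≤ cse L A B τ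
  | 0, A, B, τ => by
      rw [cse]
      split_ifs with h1 h2
      · exact le_refl 0
      · exact mul_nonneg (frobNorm_nonneg _) (frobNorm_nonneg _)
      · exact le_refl 0
  | L + 1, A, B, τ => by
      rw [cse]
      split_ifs
      · exact le_refl 0
      · exact Real.sqrt_nonneg _

/-- If a product of submatrix norms is zero, the true product is zero. -/
lemma mul_eq_zero_of_frob {m n o : Type*} [Fintype m] [Fintype n] [Fintype o]
    {A : Matrix m n ℝ} {B : Matrix n o ℝ}
    (h : frobNorm A * frobNorm B = 0) : A * B = 0 := by
  rcases mul_eq_zero.mp h with h | h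
  · rw [frobNorm_eq_zero h, Matrix.zero_mul]
  · rw [frobNorm_eq_zero h, Matrix.mul_zero]

/-- Below the tolerance, the true product's norm is bounded by the CSE estimate. -/
lemma mul_le_cse : ∀ (L : ℕ) (A B : Matrix (QIdx L) (QIdx L) ℝ) (τ : ℝ), 0 < τ →
    frobNorm A * frobNorm B < τ → frobNorm (A * B) ≤ cse L A B τ
  | 0, A, B, τ, hτ, hlt => by
      rw [cse]
      split_ifs with h1
      · rw [mul_eq_zero_of_frob h1, frobNorm_eq_norm, norm_zero]
      · exact frobNorm_mul_le A B
  | L + 1, A, B, τ, hτ, hlt => by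
      rw [cse]
      split_ifs with h1
      · rw [mul_eq_zero_of_frob h1, frobNorm_eq_norm, norm_zero]
      · have key : ∀ (X : Matrix (QIdx L) (QIdx L) ℝ) (Y : Matrix (QIdx L) (QIdx L) ℝ),
            frobNorm X ≤ frobNorm A → frobNorm Y ≤ frobNorm B →
            frobNorm X * frobNorm Y < τ := fun X Y hX hY =>
          lt_of_le_of_lt (mul_le_mul hX hY (frobNorm_nonneg _)
            (le_trans (frobNorm_nonneg _) hX)) hlt
        have bd : ∀ (X₁ X₂ Y₁ Y₂ : Matrix (QIdx L) (QIdx L) ℝ),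
            frobNorm X₁ ≤ frobNorm A → frobNorm X₂ ≤ frobNorm A →
            frobNorm Y₁ ≤ frobNorm B → frobNorm Y₂ ≤ frobNorm B →
            frobNorm (X₁ * Y₁ + X₂ * Y₂) ≤ cse L X₁ Y₁ τ + cse L X₂ Y₂ τ := by
          intro X₁ X₂ Y₁ Y₂ h1 h2 h3 h4
          refine le_trans (frobNorm_add_le _ _) (add_le_add ?_ ?_)
          · exact mul_le_cse L X₁ Y₁ τ hτ (key X₁ Y₁ h1 h3)
          · exact mul_le_cse L X₂ Y₂ τ hτ (key X₂ Y₂ h2 h4)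
        have hAB : A * B = Matrix.fromBlocks
            (A.toBlocks₁₁ * B.toBlocks₁₁ + A.toBlocks₁₂ * B.toBlocks₂₁)
            (A.toBlocks₁₁ * B.toBlocks₁₂ + A.toBlocks₁₂ * B.toBlocks₂₂)
            (A.toBlocks₂₁ * B.toBlocks₁₁ + A.toBlocks₂₂ * B.toBlocks₂₁)
            (A.toBlocks₂₁ * B.toBlocks₁₂ + A.toBlocks₂₂ * B.toBlocks₂₂) := by
          conv_lhs => rw [← Matrix.fromBlocks_toBlocks A, ← Matrix.fromBlocks_toBlocks B]
          exact Matrix.fromBlocks_multiply _ _ _ _ _ _ _ _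
        rw [hAB]
        exact frobNorm_fromBlocks_le
          (bd _ _ _ _ (frobNorm_toBlocks₁₁_le A) (frobNorm_toBlocks₁₂_le A)
            (frobNorm_toBlocks₁₁_le B) (frobNorm_toBlocks₂₁_le B))
          (bd _ _ _ _ (frobNorm_toBlocks₁₁_le A) (frobNorm_toBlocks₁₂_le A)
            (frobNorm_toBlocks₁₂_le B) (frobNorm_toBlocks₂₂_le B))
          (bd _ _ _ _ (frobNorm_toBlocks₂₁_le A) (frobNorm_toBlocks₂₂_le A)
            (frobNorm_toBlocks₁₁_le B) (frobNorm_toBlocks₂₁_le B))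
          (bd _ _ _ _ (frobNorm_toBlocks₂₁_le A) (frobNorm_toBlocks₂₂_le A)
            (frobNorm_toBlocks₁₂_le B) (frobNorm_toBlocks₂₂_le B))

/-- For all `2^L × 2^L` real matrices `A`, `B` and every tolerance
`τ > 0`, the true error of the SpAMM approximate product is bounded by the computed
CSE estimate: `‖SpAMM(A,B,τ) − A·B‖_F ≤ CSE(A,B,τ)`. -/
theorem spamm_error_le_cse (L : ℕ) (A B : Matrix (QIdx L) (QIdx L) ℝ)
    (τ : ℝ) (hτ : 0 < τ) :
    frobNorm (spamm L A B τ - A * B) ≤ cse L A B τ := by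
  induction L with
  | zero =>
      rw [spamm]
      split_ifs with h
      · rw [zero_sub, frobNorm_eq_norm, norm_neg, ← frobNorm_eq_norm]
        exact mul_le_cse 0 A B τ hτ h
      · rw [sub_self, frobNorm_eq_norm, norm_zero]
        exact cse_nonneg 0 A B τ
  | succ L ih =>
      rw [spamm]
      split_ifs with h
      · erw [if_pos h]
        rw [zero_sub, frobNorm_eq_norm, norm_neg, ← frobNorm_eq_norm]
        exact mul_le_cse (L + 1) A B τ hτ h
      · have hne : frobNorm A * frobNorm B ≠ 0 := by
          intro h0
          exact h (h0 ▸ hτ)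
        rw [cse, if_neg hne]
        have hAB : A * B = Matrix.fromBlocks
            (A.toBlocks₁₁ * B.toBlocks₁₁ + A.toBlocks₁₂ * B.toBlocks₂₁)
            (A.toBlocks₁₁ * B.toBlocks₁₂ + A.toBlocks₁₂ * B.toBlocks₂₂)
            (A.toBlocks₂₁ * B.toBlocks₁₁ + A.toBlocks₂₂ * B.toBlocks₂₁)
            (A.toBlocks₂₁ * B.toBlocks₁₂ + A.toBlocks₂₂ * B.toBlocks₂₂) := by
          conv_lhs => rw [← Matrix.fromBlocks_toBlocks A, ← Matrix.fromBlocks_toBlocks B]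
          exact Matrix.fromBlocks_multiply _ _ _ _ _ _ _ _
        rw [hAB]
        erw [if_neg h]
        erw [fromBlocks_sub']
        have bd : ∀ (X₁ X₂ Y₁ Y₂ : Matrix (QIdx L) (QIdx L) ℝ),
            frobNorm ((spamm L X₁ Y₁ τ + spamm L X₂ Y₂ τ) - (X₁ * Y₁ + X₂ * Y₂))
              ≤ cse L X₁ Y₁ τ + cse L X₂ Y₂ τ := by
          intro X₁ X₂ Y₁ Y₂
          have he : (spamm L X₁ Y₁ τ + spamm L X₂ Y₂ τ) - (X₁ * Y₁ + X₂ * Y₂)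
              = (spamm L X₁ Y₁ τ - X₁ * Y₁) + (spamm L X₂ Y₂ τ - X₂ * Y₂) := by
            abel
          rw [he]
          exact le_trans (frobNorm_add_le _ _) (add_le_add (ih X₁ Y₁) (ih X₂ Y₂))
        exact frobNorm_fromBlocks_le (bd _ _ _ _) (bd _ _ _ _) (bd _ _ _ _) (bd _ _ _ _)
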